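/- Suppose the system is (2r,2s)-sparse strongly observable, at most r inputs are attacked (with attacked set Γ_u* ) and at most s outputs are attacked (attack-free set Γ_y*). Let Γ_u with |Γ_u| ≤ r and Γ_y with |Γ_y| ≥ p−s be candidate sets. If there exist x̂ ∈ ℝⁿ and Û such that the batch output over Γ_y equals O_{Γ_y} x̂ + N_{Γ_u→Γ_y} Û (where the true trajectory is generated with zero nominal input, initial state x(t−n+1), and attack inputs supported on Γ_u*), then x̂ = x(t−n+1). -/
import Mathlib


open Matrix

/-- State sequence of the discrete-time LTI system x(t+1)=Ax(t)+Bu(t). -/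
def stSeq {n m : ℕ} (A : Matrix (Fin n) (Fin n) ℝ) (B : Matrix (Fin n) (Fin m) ℝ)
    (x0 : Fin n → ℝ) (u : ℕ → Fin m → ℝ) : ℕ → Fin n → ℝ
  | 0 => x0
  | t + 1 => A.mulVec (stSeq A B x0 u t) + B.mulVec (u t)

/-- Output sequence y(t)=Cx(t)+Du(t). -/
def outSeq {n m p : ℕ} (A : Matrix (Fin n) (Fin n) ℝ) (B : Matrix (Fin n) (Fin m) ℝ)
    (C : Matrix (Fin p) (Fin n) ℝ) (D : Matrix (Fin p) (Fin m) ℝ)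
    (x0 : Fin n → ℝ) (u : ℕ → Fin m → ℝ) (t : ℕ) : Fin p → ℝ :=
  C.mulVec (stSeq A B x0 u t) + D.mulVec (u t)

/-- Strong observability (batch form over a window of length `n`, the system order) of the
subsystem with unknown inputs `Γu` and retained outputs `Γy`: zero output on `Γy` over the
window, for inputs supported on `Γu`, forces a zero initial state. Equivalently, the batch
relation `Y|Γy = O_{Γy} x + N_{Γu→Γy} U` uniquely determines `x`. -/
def SubStrongObsW {n m p : ℕ} (A : Matrix (Fin n) (Fin n) ℝ) (B : Matrix (Fin n) (Fin m) ℝ)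
    (C : Matrix (Fin p) (Fin n) ℝ) (D : Matrix (Fin p) (Fin m) ℝ)
    (Γu : Finset (Fin m)) (Γy : Finset (Fin p)) : Prop :=
  ∀ (x0 : Fin n → ℝ) (u : ℕ → Fin m → ℝ),
    (∀ (t : ℕ) (i : Fin m), i ∉ Γu → u t i = 0) →
    (∀ k : ℕ, k < n → ∀ j ∈ Γy, outSeq A B C D x0 u k j = 0) → x0 = 0

/-- `(r,s)`-sparse strong observability (batch form): every subsystem with at most `r`
unknown inputs and at least `p - s` retained outputs is strongly observable. -/
def SparseStrongObsW {n m p : ℕ} (A : Matrix (Fin n) (Fin n) ℝ) (B : Matrix (Fin n) (Fin m) ℝ)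
    (C : Matrix (Fin p) (Fin n) ℝ) (D : Matrix (Fin p) (Fin m) ℝ) (r s : ℕ) : Prop :=
  ∀ (Γu : Finset (Fin m)) (Γy : Finset (Fin p)),
    Γu.card ≤ r → p - s ≤ Γy.card → SubStrongObsW A B C D Γu Γy

lemma stSeq_sub {n m : ℕ} (A : Matrix (Fin n) (Fin n) ℝ) (B : Matrix (Fin n) (Fin m) ℝ)
    (x0 x0' : Fin n → ℝ) (u u' : ℕ → Fin m → ℝ) (t : ℕ) :
    stSeq A B (x0 - x0') (fun k => u k - u' k) t = stSeq A B x0 u t - stSeq A B x0' u' t := by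
  induction t with
  | zero => rfl
  | succ t ih =>
    simp only [stSeq, ih, Matrix.mulVec_sub]
    abel

lemma outSeq_sub {n m p : ℕ} (A : Matrix (Fin n) (Fin n) ℝ) (B : Matrix (Fin n) (Fin m) ℝ)
    (C : Matrix (Fin p) (Fin n) ℝ) (D : Matrix (Fin p) (Fin m) ℝ)
    (x0 x0' : Fin n → ℝ) (u u' : ℕ → Fin m → ℝ) (t : ℕ) :
    outSeq A B C D (x0 - x0') (fun k => u k - u' k) t
      = outSeq A B C D x0 u t - outSeq A B C D x0' u' t := by
  simp only [outSeq, stSeq_sub, Matrix.mulVec_sub]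
  abel

/-- Proposition 1: under (2r,2s)-sparse strong observability, with true attack
input supported on Γu* (|Γu*| ≤ r), attack-free output set Γy* (|Γy*| ≥ p−s), zero nominal
input and true initial state x⋆, if candidate sets Γu (|Γu| ≤ r), Γy (|Γy| ≥ p−s) admit x̂
and an input batch Û supported on Γu that exactly explain the observed batch output on Γy,
then x̂ equals the true state x⋆. -/
theorem consistency_test_correct {n m p : ℕ}
    (A : Matrix (Fin n) (Fin n) ℝ) (B : Matrix (Fin n) (Fin m) ℝ)
    (C : Matrix (Fin p) (Fin n) ℝ) (D : Matrix (Fin p) (Fin m) ℝ) (r s : ℕ)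
    (hso : SparseStrongObsW A B C D (2 * r) (2 * s))
    (Γustar : Finset (Fin m)) (hΓustar : Γustar.card ≤ r)
    (Γystar : Finset (Fin p)) (hΓystar : p - s ≤ Γystar.card)
    (xstar : Fin n → ℝ) (w : ℕ → Fin m → ℝ)
    (hw : ∀ (t : ℕ) (i : Fin m), i ∉ Γustar → w t i = 0)
    (a : ℕ → Fin p → ℝ) (ha : ∀ (t : ℕ), ∀ j ∈ Γystar, a t j = 0)
    (Y : ℕ → Fin p → ℝ) (hY : ∀ t : ℕ, Y t = outSeq A B C D xstar w t + a t)
    (Γu : Finset (Fin m)) (hΓu : Γu.card ≤ r)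
    (Γy : Finset (Fin p)) (hΓy : p - s ≤ Γy.card)
    (xhat : Fin n → ℝ) (Uhat : ℕ → Fin m → ℝ)
    (hUhat : ∀ (t : ℕ) (i : Fin m), i ∉ Γu → Uhat t i = 0)
    (hmatch : ∀ k : ℕ, k < n → ∀ j ∈ Γy, Y k j = outSeq A B C D xhat Uhat k j) :
    xhat = xstar := by
  have key : xhat - xstar = 0 := by
    apply hso (Γu ∪ Γustar) (Γy ∩ Γystar) ?_ ?_ (xhat - xstar) (fun k => Uhat k - w k)
    · intro t i hi
      simp only [Finset.mem_union, not_or] at hi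
      simp [hUhat t i hi.1, hw t i hi.2]
    · intro k hk j hj
      rw [Finset.mem_inter] at hj
      have h1 := hmatch k hk j hj.1
      have h2 := hY k
      have h3 := ha k j hj.2
      have h2j : Y k j = outSeq A B C D xstar w k j + a k j := by rw [h2]; rfl
      rw [outSeq_sub]
      have : outSeq A B C D xhat Uhat k j = outSeq A B C D xstar w k j := by
        rw [← h1, h2j, h3, add_zero]
      simp [Pi.sub_apply, this]
    · calc (Γu ∪ Γustar).card ≤ Γu.card + Γustar.card := Finset.card_union_le _ _
        _ ≤ 2 * r := by omega
    · have hcap : (Γy ∪ Γystar).card + (Γy ∩ Γystar).card = Γy.card + Γystar.card :=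
        Finset.card_union_add_card_inter _ _
      have hle : (Γy ∪ Γystar).card ≤ p := by
        simpa using Finset.card_le_card (Finset.subset_univ (Γy ∪ Γystar))
      omega
  have := sub_eq_zero.mp key
  exact this
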